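/- Let W ≥ 2 be an integer and B > 1 a real number. There do not exist random variables X and Y taking values in a finite set Ω of cardinality W, with disjoint supports, such that H(X) ≥ log₂ W − log₂ B and H(Y) ≥ log₂ W − 1/B. -/

import Mathlib

open Finset

/-- Shannon entropy (base-2 logarithms) of a probability mass function on a finite set. -/
noncomputable def shannonEntropy {Ω : Type*} [Fintype Ω] (p : Ω → ℝ) : ℝ :=
  -∑ ω, p ω * Real.logb 2 (p ω)

lemma log_ge_one_sub_inv {x : ℝ} (hx : 0 < x) : 1 - 1/x ≤ Real.log x := by
  have h := Real.log_le_sub_one_of_pos (show (0:ℝ) < 1/x by positivity)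
  rw [one_div, Real.log_inv] at h
  have : (1:ℝ)/x = x⁻¹ := one_div x
  linarith [this ▸ h]

lemma entropy_le_logb_card {Ω : Type*} [Fintype Ω] (p : Ω → ℝ)
    (h0 : ∀ ω, 0 ≤ p ω) (h1 : ∑ ω, p ω = 1) :
    shannonEntropy p ≤
      Real.logb 2 ((Finset.univ.filter (fun ω => 0 < p ω)).card) := by
  set S := Finset.univ.filter (fun ω => 0 < p ω) with hSdef
  have hmem : ∀ ω ∈ S, 0 < p ω := fun ω hω => (Finset.mem_filter.mp hω).2
  have hzero : ∀ ω ∉ S, p ω = 0 := by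
    intro ω hω
    by_contra h
    exact hω (Finset.mem_filter.mpr ⟨Finset.mem_univ _,
      lt_of_le_of_ne (h0 ω) (Ne.symm h)⟩)
  have hS1 : ∑ ω ∈ S, p ω = 1 := by
    rw [← h1]
    exact Finset.sum_subset (Finset.subset_univ S) (fun x _ hx => hzero x hx)
  have hScard : 0 < S.card := by
    rw [Finset.card_pos]
    by_contra h
    rw [Finset.not_nonempty_iff_eq_empty.mp h, Finset.sum_empty] at hS1
    norm_num at hS1
  set n : ℝ := (S.card : ℝ) with hndef
  have hn : 0 < n := by rw [hndef]; exact_mod_cast hScard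
  have hE : shannonEntropy p = -∑ ω ∈ S, p ω * Real.logb 2 (p ω) := by
    unfold shannonEntropy
    congr 1
    symm
    apply Finset.sum_subset (Finset.subset_univ S)
    intro x _ hx
    rw [hzero x hx]
    simp
  have key : 0 ≤ ∑ ω ∈ S, p ω * Real.log (n * p ω) := by
    have step : ∑ ω ∈ S, (p ω - 1/n) ≤ ∑ ω ∈ S, p ω * Real.log (n * p ω) := by
      apply Finset.sum_le_sum
      intro ω hω
      have hp := hmem ω hω
      have hnp : 0 < n * p ω := by positivity
      have hl : 1 - 1/(n * p ω) ≤ Real.log (n * p ω) := log_ge_one_sub_inv hnp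
      have hmul := mul_le_mul_of_nonneg_left hl (h0 ω)
      have heq : p ω * (1 - 1/(n * p ω)) = p ω - 1/n := by
        field_simp
      linarith [heq ▸ hmul]
    have hsum : ∑ ω ∈ S, (p ω - 1/n) = 0 := by
      rw [Finset.sum_sub_distrib, hS1, Finset.sum_const, nsmul_eq_mul]
      field_simp
      simp [hndef]
    linarith
  have expand : ∑ ω ∈ S, p ω * Real.log (n * p ω)
      = Real.log n + ∑ ω ∈ S, p ω * Real.log (p ω) := by
    have : ∀ ω ∈ S, p ω * Real.log (n * p ω)
        = p ω * Real.log n + p ω * Real.log (p ω) := by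
      intro ω hω
      rw [Real.log_mul (ne_of_gt hn) (ne_of_gt (hmem ω hω))]
      ring
    rw [Finset.sum_congr rfl this, Finset.sum_add_distrib, ← Finset.sum_mul, hS1,
      one_mul]
  have key2 : -∑ ω ∈ S, p ω * Real.log (p ω) ≤ Real.log n := by linarith
  have hlog2 : 0 < Real.log 2 := Real.log_pos one_lt_two
  have hE2 : shannonEntropy p = (-∑ ω ∈ S, p ω * Real.log (p ω)) / Real.log 2 := by
    rw [hE, neg_div, Finset.sum_div]
    congr 1
    apply Finset.sum_congr rfl
    intro ω _
    rw [Real.logb, mul_div_assoc]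
  rw [hE2, Real.logb]
  gcongr

theorem stmt_2 {Ω : Type*} [Fintype Ω] (W : ℕ) (B : ℝ) (hW : 2 ≤ W) (hB : 1 < B)
    (hcard : Fintype.card Ω = W)
    (pX pY : Ω → ℝ)
    (hX0 : ∀ ω, 0 ≤ pX ω) (hX1 : ∑ ω, pX ω = 1)
    (hY0 : ∀ ω, 0 ≤ pY ω) (hY1 : ∑ ω, pY ω = 1)
    (hdisj : ∀ ω, ¬(0 < pX ω ∧ 0 < pY ω))
    (hHX : Real.logb 2 W - Real.logb 2 B ≤ shannonEntropy pX)
    (hHY : Real.logb 2 W - 1 / B ≤ shannonEntropy pY) :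
    False := by
  classical
  set SX := Finset.univ.filter (fun ω => 0 < pX ω) with hSX
  set SY := Finset.univ.filter (fun ω => 0 < pY ω) with hSY
  have hdisjS : Disjoint SX SY := by
    rw [Finset.disjoint_left]
    intro ω hx hy
    exact hdisj ω ⟨(Finset.mem_filter.mp hx).2, (Finset.mem_filter.mp hy).2⟩
  have hcards : SX.card + SY.card ≤ W := by
    have := Finset.card_le_card (Finset.subset_univ (SX ∪ SY))
    rw [Finset.card_union_of_disjoint hdisjS, Finset.card_univ, hcard] at this
    exact this
  -- positivity of cards
  have hX1' : ∑ ω ∈ SX, pX ω = 1 := by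
    rw [← hX1]
    apply Finset.sum_subset (Finset.subset_univ SX)
    intro x _ hx
    by_contra h
    exact hx (Finset.mem_filter.mpr ⟨Finset.mem_univ _,
      lt_of_le_of_ne (hX0 x) (Ne.symm h)⟩)
  have hY1' : ∑ ω ∈ SY, pY ω = 1 := by
    rw [← hY1]
    apply Finset.sum_subset (Finset.subset_univ SY)
    intro x _ hx
    by_contra h
    exact hx (Finset.mem_filter.mpr ⟨Finset.mem_univ _,
      lt_of_le_of_ne (hY0 x) (Ne.symm h)⟩)
  have hXc : 0 < SX.card := by
    rw [Finset.card_pos]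
    by_contra h
    rw [Finset.not_nonempty_iff_eq_empty.mp h, Finset.sum_empty] at hX1'
    norm_num at hX1'
  have hYc : 0 < SY.card := by
    rw [Finset.card_pos]
    by_contra h
    rw [Finset.not_nonempty_iff_eq_empty.mp h, Finset.sum_empty] at hY1'
    norm_num at hY1'
  have hXcR : (0:ℝ) < SX.card := by exact_mod_cast hXc
  have hYcR : (0:ℝ) < SY.card := by exact_mod_cast hYc
  have hWR : (0:ℝ) < W := by
    have : 0 < W := by omega
    exact_mod_cast this
  have hBpos : (0:ℝ) < B := by linarith
  have hBX : (W:ℝ)/B ≤ SX.card := by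
    have hent := entropy_le_logb_card pX hX0 hX1
    have hle : Real.logb 2 ((W:ℝ)/B) ≤ Real.logb 2 (SX.card) := by
      rw [Real.logb_div (ne_of_gt hWR) (ne_of_gt hBpos)]
      exact le_trans hHX hent
    exact (Real.logb_le_logb one_lt_two (by positivity) hXcR).mp hle
  have hBY : (W:ℝ) * (2:ℝ)^(-(1/B)) ≤ SY.card := by
    have hent := entropy_le_logb_card pY hY0 hY1
    have heq : Real.logb 2 ((W:ℝ) * (2:ℝ)^(-(1/B))) = Real.logb 2 W - 1/B := by
      rw [Real.logb_mul (ne_of_gt hWR) (ne_of_gt (Real.rpow_pos_of_pos two_pos _)),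
        Real.logb_rpow two_pos (by norm_num)]
      ring
    apply (Real.logb_le_logb one_lt_two (by positivity) hYcR).mp
    rw [heq]
    exact le_trans hHY hent
  have hgt : (1:ℝ) - 1/B < (2:ℝ)^(-(1/B)) := by
    rw [Real.rpow_def_of_pos two_pos]
    have h1 := Real.add_one_le_exp (Real.log 2 * (-(1/B)))
    have hlog2lt : Real.log 2 < 1 := by
      have := Real.log_two_lt_d9
      linarith
    have hinv : (0:ℝ) < 1/B := by positivity
    nlinarith
  have hid : (W:ℝ)/B + (W:ℝ)*(1-1/B) = W := by
    field_simp
    ring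
  have hsum : (SX.card:ℝ) + (SY.card:ℝ) ≤ (W:ℝ) := by exact_mod_cast hcards
  nlinarith [mul_lt_mul_of_pos_left hgt hWR]
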